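/- arXiv:1507.04743 — 4 statements merged into one kernel-verified Lean document; each statement's English description precedes it below -/
import Mathlib

section
/- For every positive integer N, the number of sublattices of ℤ² of index N equals σ(N) = Σ_{k∣N} k, the sum of the positive divisors of N. -/
open AddSubgroup

/-- The sublattice of `ℤ²` generated by `(a,0)` and `(b,d)`. -/
def latL (a d : ℕ) (b : ℤ) : AddSubgroup (ℤ × ℤ) where
  carrier := {p | (d : ℤ) ∣ p.2 ∧ ((a : ℤ) * d) ∣ (p.1 * d - p.2 * b)}
  zero_mem' := by simp
  add_mem' := by
    rintro p q ⟨h1, h2⟩ ⟨h3, h4⟩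
    refine ⟨dvd_add h1 h3, ?_⟩
    have := dvd_add h2 h4
    convert this using 1
    · rfl
    simp only [Prod.fst_add, Prod.snd_add]
    ring
  neg_mem' := by
    rintro p ⟨h1, h2⟩
    refine ⟨(dvd_neg).mpr h1, ?_⟩
    have := dvd_neg.mpr h2
    convert this using 1
    · rfl
    simp only [Prod.fst_neg, Prod.snd_neg]
    ring

lemma mem_latL {a d : ℕ} {b : ℤ} {p : ℤ × ℤ} :
    p ∈ latL a d b ↔ (d : ℤ) ∣ p.2 ∧ ((a : ℤ) * d) ∣ (p.1 * d - p.2 * b) := Iff.rfl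

lemma gen1_mem_latL (a d : ℕ) (b : ℤ) : ((a : ℤ), (0 : ℤ)) ∈ latL a d b :=
  ⟨dvd_zero _, ⟨1, by ring⟩⟩

lemma gen2_mem_latL (a d : ℕ) (b : ℤ) : (b, (d : ℤ)) ∈ latL a d b :=
  ⟨dvd_refl _, ⟨0, by ring⟩⟩

lemma fst_dvd_of_mem_latL {a d : ℕ} {b x : ℤ} (hd : d ≠ 0)
    (h : (x, (0 : ℤ)) ∈ latL a d b) : (a : ℤ) ∣ x := by
  obtain ⟨-, k, hk⟩ := h
  have hdz : (d : ℤ) ≠ 0 := Int.natCast_ne_zero.mpr hd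
  refine ⟨k, mul_right_cancel₀ hdz ?_⟩
  rw [show ((a:ℤ) * k) * d = (a * d) * k by ring, ← hk]; ring

/-- The quotient of `ℤ²` by `latL a d b` has `a * d` elements. -/
lemma card_latL (a d : ℕ) (b : ℤ) (ha : a ≠ 0) (hd : d ≠ 0) :
    Nat.card ((ℤ × ℤ) ⧸ latL a d b) = a * d := by
  haveI : NeZero a := ⟨ha⟩
  haveI : NeZero d := ⟨hd⟩
  have hdz : (d : ℤ) ≠ 0 := Int.natCast_ne_zero.mpr hd
  set f : ℤ × ℤ → ZMod a × ZMod d :=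
    fun p => (((p.1 - p.2 / d * b : ℤ) : ZMod a), ((p.2 : ℤ) : ZMod d)) with hfdef
  have key : ∀ p q : ℤ × ℤ, -p + q ∈ latL a d b → f p = f q := by
    rintro p q ⟨h1, h2⟩
    simp only [Prod.fst_add, Prod.snd_add, Prod.fst_neg, Prod.snd_neg] at h1 h2
    rw [neg_add_eq_sub] at h1
    obtain ⟨m, hm⟩ := h1
    have hq2 : q.2 = p.2 + m * d := by rw [mul_comm] at hm; linarith
    have hdiv : q.2 / d = p.2 / d + m := by
      rw [hq2, Int.add_mul_ediv_right _ _ hdz]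
    have h2' : ((a : ℤ) * d) ∣ ((q.1 - p.1) - m * b) * d := by
      have : (-p.1 + q.1) * (d:ℤ) - (-p.2 + q.2) * b = ((q.1 - p.1) - m * b) * d := by
        rw [show -p.2 + q.2 = m * (d:ℤ) by rw [hq2]; ring]
        ring
      rwa [this] at h2
    have ha' : (a : ℤ) ∣ ((q.1 - p.1) - m * b) := (mul_dvd_mul_iff_right hdz).mp h2'
    have c1 : ((p.1 - p.2 / d * b : ℤ) : ZMod a) = ((q.1 - q.2 / d * b : ℤ) : ZMod a) := by
      rw [← sub_eq_zero, ← Int.cast_sub, ZMod.intCast_zmod_eq_zero_iff_dvd]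
      have e : (p.1 - p.2 / d * b) - (q.1 - q.2 / d * b) = -((q.1 - p.1) - m * b) := by
        rw [hdiv]; ring
      rw [e]; exact dvd_neg.mpr ha'
    have c2 : ((p.2 : ℤ) : ZMod d) = ((q.2 : ℤ) : ZMod d) := by
      rw [← sub_eq_zero, ← Int.cast_sub, ZMod.intCast_zmod_eq_zero_iff_dvd]
      rw [show p.2 - q.2 = -(q.2 - p.2) by ring]
      exact dvd_neg.mpr ⟨m, hm⟩
    exact Prod.ext c1 c2
  let F : ((ℤ × ℤ) ⧸ latL a d b) → ZMod a × ZMod d :=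
    fun z => Quotient.liftOn' z f
      (fun p q h => key p q ((QuotientAddGroup.leftRel_apply).mp h))
  have hF : ∀ p : ℤ × ℤ, F (QuotientAddGroup.mk p) = f p := fun p => rfl
  have hbij : Function.Bijective F := by
    constructor
    · intro z w h
      induction z using QuotientAddGroup.induction_on with | H p =>
      induction w using QuotientAddGroup.induction_on with | H q =>
      rw [hF, hF] at h
      have c1 := congrArg Prod.fst h
      have c2 := congrArg Prod.snd h
      simp only [hfdef] at c1 c2
      rw [QuotientAddGroup.eq]
      have h1 : (d : ℤ) ∣ q.2 - p.2 := by
        rw [← ZMod.intCast_zmod_eq_zero_iff_dvd, Int.cast_sub, sub_eq_zero]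
        exact c2.symm
      obtain ⟨m, hm⟩ := h1
      have hq2 : q.2 = p.2 + m * d := by rw [mul_comm] at hm; linarith
      have hdiv : q.2 / d = p.2 / d + m := by
        rw [hq2, Int.add_mul_ediv_right _ _ hdz]
      have ha' : (a : ℤ) ∣ ((q.1 - p.1) - m * b) := by
        rw [← ZMod.intCast_zmod_eq_zero_iff_dvd]
        have e : ((q.1 - p.1) - m * b : ℤ) = (q.1 - q.2 / d * b) - (p.1 - p.2 / d * b) := by
          rw [hdiv]; ring
        rw [e, Int.cast_sub, sub_eq_zero]
        exact c1.symm
      refine ⟨⟨m, by simpa [neg_add_eq_sub] using hm⟩, ?_⟩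
      obtain ⟨k, hk⟩ := ha'
      refine ⟨k, ?_⟩
      simp only [Prod.fst_add, Prod.snd_add, Prod.fst_neg, Prod.snd_neg]
      rw [show -p.2 + q.2 = m * (d:ℤ) by rw [hq2]; ring,
          show -p.1 + q.1 = (a:ℤ) * k + m * b by rw [neg_add_eq_sub]; linarith [hk]]
      ring
    · rintro ⟨u, v⟩
      refine ⟨QuotientAddGroup.mk ((u.val : ℤ), (v.val : ℤ)), ?_⟩
      rw [hF]
      have hv : ((v.val : ℤ) / (d : ℤ)) = 0 :=
        Int.ediv_eq_zero_of_lt (by positivity) (by exact_mod_cast ZMod.val_lt v)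
      simp only [hfdef, hv]
      simp [Prod.ext_iff, ZMod.natCast_val, ZMod.intCast_cast, ZMod.cast_id]
  rw [Nat.card_eq_of_bijective F hbij, Nat.card_prod, Nat.card_zmod, Nat.card_zmod]

/-- Every finite-index sublattice of `ℤ²` is `latL a d b` for suitable `a, d, b`. -/
lemma latL_classify (Λ : AddSubgroup (ℤ × ℤ)) (hfin : Finite ((ℤ × ℤ) ⧸ Λ)) :
    ∃ (a d : ℕ) (b : ℤ), a ≠ 0 ∧ d ≠ 0 ∧ 0 ≤ b ∧ b < a ∧ Λ = latL a d b := by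
  obtain ⟨g, hg⟩ := Int.subgroup_cyclic (Λ.map (AddMonoidHom.snd ℤ ℤ))
  obtain ⟨h, hh⟩ := Int.subgroup_cyclic (Λ.comap ((AddMonoidHom.inl ℤ ℤ)))
  rw [← AddSubgroup.zmultiples_eq_closure] at hg hh
  set d : ℕ := g.natAbs with hd
  set a : ℕ := h.natAbs with ha
  have hS : ∀ y : ℤ, (∃ x, (x, y) ∈ Λ) ↔ (d : ℤ) ∣ y := by
    intro y
    rw [Int.natAbs_dvd]
    constructor
    · rintro ⟨x, hx⟩
      have : y ∈ Λ.map (AddMonoidHom.snd ℤ ℤ) := ⟨(x, y), hx, rfl⟩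
      rw [hg] at this
      exact Int.mem_zmultiples_iff.mp this
    · intro hy
      have : y ∈ Λ.map (AddMonoidHom.snd ℤ ℤ) := by
        rw [hg]; exact Int.mem_zmultiples_iff.mpr hy
      obtain ⟨p, hp, hp2⟩ := this
      exact ⟨p.1, by rwa [show ((p.1 : ℤ), y) = p by ext <;> simp [← hp2]]⟩
  have hK : ∀ x : ℤ, (x, (0:ℤ)) ∈ Λ ↔ (a : ℤ) ∣ x := by
    intro x
    rw [Int.natAbs_dvd]
    constructor
    · intro hx
      have : x ∈ Λ.comap (AddMonoidHom.inl ℤ ℤ) := hx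
      rw [hh] at this
      exact Int.mem_zmultiples_iff.mp this
    · intro hx
      have : x ∈ Λ.comap (AddMonoidHom.inl ℤ ℤ) := by
        rw [hh]; exact Int.mem_zmultiples_iff.mpr hx
      exact this
  have hd0 : d ≠ 0 := by
    intro h0
    have hinj : Function.Injective (fun y : ℤ => (QuotientAddGroup.mk ((0:ℤ), y) : (ℤ × ℤ) ⧸ Λ)) := by
      intro y y' hyy
      rw [QuotientAddGroup.eq] at hyy
      have : ∃ x, (x, -y + y') ∈ Λ := ⟨0, hyy⟩
      rw [hS, h0] at this
      simp only [Nat.cast_zero, zero_dvd_iff] at this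
      linarith
    haveI := hfin
    haveI := Infinite.of_injective _ hinj
    exact not_finite ((ℤ × ℤ) ⧸ Λ)
  have ha0 : a ≠ 0 := by
    intro h0
    have hinj : Function.Injective (fun x : ℤ => (QuotientAddGroup.mk (x, (0:ℤ)) : (ℤ × ℤ) ⧸ Λ)) := by
      intro x x' hxx
      rw [QuotientAddGroup.eq] at hxx
      have : (-x + x', (0:ℤ)) ∈ Λ := by
        rw [show ((-x + x' : ℤ), (0:ℤ)) = -(x,(0:ℤ)) + (x',(0:ℤ)) by ext <;> simp]
        exact hxx
      rw [hK, h0] at this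
      simp only [Nat.cast_zero, zero_dvd_iff] at this
      linarith
    haveI := hfin
    haveI := Infinite.of_injective _ hinj
    exact not_finite ((ℤ × ℤ) ⧸ Λ)
  obtain ⟨b₀, hb₀⟩ := (hS (d : ℤ)).mpr dvd_rfl
  set b : ℤ := b₀ % a with hb
  have hdz : (d : ℤ) ≠ 0 := Int.natCast_ne_zero.mpr hd0
  have hba : (a : ℤ) ∣ b - b₀ := by
    rw [hb, Int.emod_def]
    exact ⟨-(b₀ / a), by ring⟩
  have hbd : (b, (d : ℤ)) ∈ Λ := by
    have h1 : ((b - b₀ : ℤ), (0:ℤ)) ∈ Λ := (hK _).mpr hba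
    have h2 := AddSubgroup.add_mem Λ h1 hb₀
    rw [show ((b - b₀ : ℤ), (0:ℤ)) + (b₀, (d:ℤ)) = (b, (d:ℤ)) by ext <;> simp] at h2
    exact h2
  refine ⟨a, d, b, ha0, hd0,
    Int.emod_nonneg _ (Int.natCast_ne_zero.mpr ha0),
    by exact_mod_cast Int.emod_lt_of_pos b₀ (by positivity), ?_⟩
  ext p
  obtain ⟨x, y⟩ := p
  constructor
  · intro hp
    obtain ⟨m, hm⟩ := (hS y).mp ⟨x, hp⟩
    have h1 : ((x - m * b : ℤ), (0:ℤ)) ∈ Λ := by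
      have h2 := AddSubgroup.sub_mem Λ hp (AddSubgroup.zsmul_mem Λ hbd m)
      have e : (x, y) - m • (b, (d:ℤ)) = ((x - m * b : ℤ), (0:ℤ)) := by
        ext
        · simp only [Prod.fst_sub, Prod.smul_fst, zsmul_eq_mul, Prod.fst_mul, Prod.snd_mul, Prod.fst_intCast, Prod.snd_intCast, Int.cast_id]
        · simp only [Prod.snd_sub, Prod.smul_snd, zsmul_eq_mul, Prod.fst_mul, Prod.snd_mul, Prod.fst_intCast, Prod.snd_intCast, Int.cast_id]
          rw [hm]; ring
      rwa [e] at h2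
    obtain ⟨k, hk⟩ := (hK _).mp h1
    refine ⟨⟨m, hm⟩, ⟨k, ?_⟩⟩
    rw [hm]
    linear_combination (d : ℤ) * hk
  · rintro ⟨⟨m, hm⟩, ⟨k, hk⟩⟩
    have hm' : y = (d:ℤ) * m := hm
    have hk' : x * (d:ℤ) - y * b = ((a:ℤ) * d) * k := hk
    have hx : x = a * k + m * b := by
      have h2 : (x - m * b) * (d:ℤ) = ((a:ℤ) * k) * d := by
        rw [hm'] at hk'; linear_combination hk'
      have := mul_right_cancel₀ hdz h2
      linarith
    have he : ((x : ℤ), y) = k • ((a:ℤ), (0:ℤ)) + m • (b, (d:ℤ)) := by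
      ext
      · simp only [Prod.fst_add, Prod.smul_fst, zsmul_eq_mul, Prod.fst_mul, Prod.snd_mul, Prod.fst_intCast, Prod.snd_intCast, Int.cast_id]
        rw [hx]; ring
      · simp only [Prod.snd_add, Prod.smul_snd, zsmul_eq_mul, Prod.fst_mul, Prod.snd_mul, Prod.fst_intCast, Prod.snd_intCast, Int.cast_id, smul_zero]
        rw [hm']; ring
    rw [he]
    exact AddSubgroup.add_mem _
      (AddSubgroup.zsmul_mem _ ((hK _).mpr dvd_rfl) k)
      (AddSubgroup.zsmul_mem _ hbd m)

/-- The number of sublattices of `ℤ²` of index `N` equals `σ(N)`, the sum of the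
positive divisors of `N`. A sublattice of index `N` is an additive subgroup `Λ` of
`ℤ × ℤ` such that the quotient group `(ℤ × ℤ) ⧸ Λ` has cardinality `N`. -/
theorem number_of_index_N_sublattices (N : ℕ) (hN : 0 < N) :
    Nat.card {Λ : AddSubgroup (ℤ × ℤ) // Nat.card ((ℤ × ℤ) ⧸ Λ) = N} =
      ∑ k ∈ N.divisors, k := by
  have hN' : N ≠ 0 := hN.ne'
  let Φ : (Σ p : N.divisorsAntidiagonal, Fin p.1.1) →
      {Λ : AddSubgroup (ℤ × ℤ) // Nat.card ((ℤ × ℤ) ⧸ Λ) = N} := fun t =>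
    ⟨latL t.1.1.1 t.1.1.2 ((t.2 : ℕ) : ℤ), by
      obtain ⟨hmul, -⟩ := Nat.mem_divisorsAntidiagonal.mp t.1.2
      obtain ⟨ha, hd⟩ := Nat.mul_ne_zero_iff.mp (hmul ▸ hN')
      rw [card_latL _ _ _ ha hd, hmul]⟩
  have hbij : Function.Bijective Φ := by
    constructor
    · rintro ⟨⟨⟨a, d⟩, hp⟩, u⟩ ⟨⟨⟨a', d'⟩, hp'⟩, u'⟩ hEq
      have hL : latL a d ((u : ℕ) : ℤ) = latL a' d' ((u' : ℕ) : ℤ) :=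
        congrArg Subtype.val hEq
      obtain ⟨hmul, -⟩ := Nat.mem_divisorsAntidiagonal.mp hp
      obtain ⟨hmul', -⟩ := Nat.mem_divisorsAntidiagonal.mp hp'
      obtain ⟨ha0, hd0⟩ := Nat.mul_ne_zero_iff.mp (hmul ▸ hN')
      obtain ⟨ha0', hd0'⟩ := Nat.mul_ne_zero_iff.mp (hmul' ▸ hN')
      obtain rfl : d = d' := by
        refine Nat.dvd_antisymm ?_ ?_
        · have h1 := (hL ▸ gen2_mem_latL a' d' ((u' : ℕ) : ℤ)).1
          have h2 : (d : ℤ) ∣ (d' : ℤ) := h1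
          exact_mod_cast h2
        · have h1 := (hL.symm ▸ gen2_mem_latL a d ((u : ℕ) : ℤ)).1
          have h2 : (d' : ℤ) ∣ (d : ℤ) := h1
          exact_mod_cast h2
      obtain rfl : a = a' := by
        refine Nat.dvd_antisymm ?_ ?_
        · have := fst_dvd_of_mem_latL hd0 (hL.symm ▸ gen1_mem_latL a' d ((u' : ℕ) : ℤ))
          exact_mod_cast this
        · have := fst_dvd_of_mem_latL hd0' (hL ▸ gen1_mem_latL a d ((u : ℕ) : ℤ))
          exact_mod_cast this
      obtain rfl : u = u' := by
        have h1 : (((u : ℕ) : ℤ), (d : ℤ)) ∈ latL a d ((u' : ℕ) : ℤ) :=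
          hL ▸ gen2_mem_latL a d ((u : ℕ) : ℤ)
        have h2 := AddSubgroup.sub_mem _ h1 (gen2_mem_latL a d (((u' : ℕ) : ℤ)))
        rw [show (((u : ℕ) : ℤ), (d : ℤ)) - (((u' : ℕ) : ℤ), (d : ℤ))
            = (((u : ℕ) : ℤ) - ((u' : ℕ) : ℤ), (0 : ℤ)) by ext <;> simp] at h2
        have h3 := fst_dvd_of_mem_latL hd0 h2
        have h4 : ((u : ℕ) : ℤ) - ((u' : ℕ) : ℤ) = 0 := by
          refine Int.eq_zero_of_abs_lt_dvd h3 ?_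
          have hu : (u : ℕ) < a := u.isLt
          have hu' : (u' : ℕ) < a := u'.isLt
          rw [abs_sub_lt_iff]
          omega
        have : (u : ℕ) = (u' : ℕ) := by omega
        exact Fin.ext this
      rfl
    · rintro ⟨Λ, hcard⟩
      have hfin : Finite ((ℤ × ℤ) ⧸ Λ) := by
        have hne : Nat.card ((ℤ × ℤ) ⧸ Λ) ≠ 0 := by rw [hcard]; exact hN'
        exact (Nat.card_ne_zero.mp hne).2
      obtain ⟨a, d, b, ha0, hd0, hb0, hba, rfl⟩ := latL_classify Λ hfin
      have hmul : a * d = N := by rw [← hcard, card_latL _ _ _ ha0 hd0]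
      have hblt : b.toNat < a := by omega
      refine ⟨⟨⟨(a, d), Nat.mem_divisorsAntidiagonal.mpr ⟨hmul, hN'⟩⟩, ⟨b.toNat, hblt⟩⟩, ?_⟩
      apply Subtype.ext
      show latL a d ((b.toNat : ℕ) : ℤ) = latL a d b
      rw [Int.toNat_of_nonneg hb0]
  rw [← Nat.card_eq_of_bijective Φ hbij, Nat.card_eq_fintype_card, Fintype.card_sigma]
  simp only [Fintype.card_fin]
  rw [Finset.sum_coe_sort N.divisorsAntidiagonal (fun p => p.1),
    Nat.sum_divisorsAntidiagonal (fun i _ => i)]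
end

section
/- Every sublattice of ℤ² of index N lies in the SL(2,ℤ)-orbit of the sublattice (ab)ℤ × bℤ = {(x, y) ∈ ℤ² : ab ∣ x and b ∣ y} for exactly one pair of positive integers (a, b) with a b² = N; in particular the lattices {(ab)ℤ × bℤ : a b² = N} form a complete set of representatives of the orbits. -/
/-- The additive group endomorphism of `ℤ × ℤ` given by multiplication by a matrix
`A ∈ SL(2, ℤ)`. -/
def SL2Map (A : Matrix.SpecialLinearGroup (Fin 2) ℤ) : (ℤ × ℤ) →+ (ℤ × ℤ) where
  toFun v := (A.1 0 0 * v.1 + A.1 0 1 * v.2, A.1 1 0 * v.1 + A.1 1 1 * v.2)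
  map_zero' := by simp
  map_add' v w := by simp [Prod.ext_iff]; constructor <;> ring

/-- The "rectangular" sublattice `mℤ × bℤ = {(x, y) ∈ ℤ² : m ∣ x ∧ b ∣ y}`. -/
def rectLat (m b : ℕ) : AddSubgroup (ℤ × ℤ) where
  carrier := {v : ℤ × ℤ | (m : ℤ) ∣ v.1 ∧ (b : ℤ) ∣ v.2}
  zero_mem' := ⟨dvd_zero _, dvd_zero _⟩
  add_mem' := fun ha hb => ⟨dvd_add ha.1 hb.1, dvd_add ha.2 hb.2⟩
  neg_mem' := fun ha => ⟨dvd_neg.2 ha.1, dvd_neg.2 ha.2⟩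

abbrev SL2 := Matrix.SpecialLinearGroup (Fin 2) ℤ

lemma mem_rectLat {m b : ℕ} {v : ℤ × ℤ} : v ∈ rectLat m b ↔ (m : ℤ) ∣ v.1 ∧ (b : ℤ) ∣ v.2 :=
  Iff.rfl

def span2 (v w : ℤ × ℤ) : AddSubgroup (ℤ × ℤ) := AddSubgroup.closure {v, w}

lemma mem_span2_left (v w : ℤ × ℤ) : v ∈ span2 v w :=
  AddSubgroup.subset_closure (by simp)

lemma mem_span2_right (v w : ℤ × ℤ) : w ∈ span2 v w :=
  AddSubgroup.subset_closure (by simp)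

lemma span2_le {v w : ℤ × ℤ} {H : AddSubgroup (ℤ × ℤ)} (hv : v ∈ H) (hw : w ∈ H) :
    span2 v w ≤ H := by
  apply (AddSubgroup.closure_le _).2
  intro x hx
  rcases hx with rfl | rfl
  · exact hv
  · exact hw

lemma span2_comm (v w : ℤ × ℤ) : span2 v w = span2 w v := by
  unfold span2; rw [Set.pair_comm]

lemma span2_add_right (v w : ℤ × ℤ) (n : ℤ) : span2 v (w + n • v) = span2 v w := by
  apply le_antisymm
  · exact span2_le (mem_span2_left _ _)
      (AddSubgroup.add_mem _ (mem_span2_right _ _)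
        (AddSubgroup.zsmul_mem _ (mem_span2_left _ _) n))
  · refine span2_le (mem_span2_left _ _) ?_
    have h2 := AddSubgroup.add_mem _ (mem_span2_right v (w + n • v))
      (AddSubgroup.zsmul_mem _ (mem_span2_left v (w + n • v)) (-n))
    rwa [neg_smul, add_neg_cancel_right] at h2

lemma span2_add_left (v w : ℤ × ℤ) (n : ℤ) : span2 (v + n • w) w = span2 v w := by
  rw [span2_comm, span2_add_right, span2_comm]

lemma span2_neg_left (v w : ℤ × ℤ) : span2 (-v) w = span2 v w := by
  apply le_antisymm
  · exact span2_le (AddSubgroup.neg_mem _ (mem_span2_left _ _)) (mem_span2_right _ _)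
  · exact span2_le (by simpa using AddSubgroup.neg_mem _ (mem_span2_left (-v) w))
      (mem_span2_right _ _)

lemma span2_neg_right (v w : ℤ × ℤ) : span2 v (-w) = span2 v w := by
  rw [span2_comm, span2_neg_left, span2_comm]

lemma span2_map (f : (ℤ × ℤ) →+ (ℤ × ℤ)) (v w : ℤ × ℤ) :
    (span2 v w).map f = span2 (f v) (f w) := by
  unfold span2
  rw [AddMonoidHom.map_closure, Set.image_pair]

lemma span2_diag (x y : ℤ) : span2 (x, 0) (0, y) = rectLat x.natAbs y.natAbs := by
  apply le_antisymm
  · refine span2_le ⟨?_, dvd_zero _⟩ ⟨dvd_zero _, ?_⟩ <;> simp [Int.natAbs_dvd]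
  · rintro ⟨a, c⟩ ⟨hx, hy⟩
    rw [Int.natAbs_dvd] at hx hy
    obtain ⟨k, hk⟩ := hx
    obtain ⟨l, hl⟩ := hy
    have h : (a, c) = k • ((x : ℤ), (0 : ℤ)) + l • ((0 : ℤ), (y : ℤ)) := by
      simp only [Prod.fst, Prod.snd] at hk hl
      simp [Prod.ext_iff, smul_eq_mul]
      constructor
      · rw [hk]; ring
      · rw [hl]; ring
    rw [h]
    exact AddSubgroup.add_mem _ (AddSubgroup.zsmul_mem _ (mem_span2_left _ _) _)
      (AddSubgroup.zsmul_mem _ (mem_span2_right _ _) _)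
lemma SL2Map_apply (A : SL2) (v : ℤ × ℤ) :
    SL2Map A v = (A.1 0 0 * v.1 + A.1 0 1 * v.2, A.1 1 0 * v.1 + A.1 1 1 * v.2) := rfl

lemma SL2Map_one : SL2Map 1 = AddMonoidHom.id (ℤ × ℤ) := by
  apply AddMonoidHom.ext
  intro v
  simp [SL2Map_apply]

lemma SL2Map_mul (A B : SL2) : SL2Map (A * B) = (SL2Map A).comp (SL2Map B) := by
  apply AddMonoidHom.ext
  intro v
  simp only [SL2Map_apply, AddMonoidHom.comp_apply, Matrix.SpecialLinearGroup.coe_mul,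
    Matrix.mul_apply, Fin.sum_univ_two]
  rw [Prod.ext_iff]; constructor <;> ring

def matS : SL2 := ⟨!![0, -1; 1, 0], by simp [Matrix.det_fin_two_of]⟩

def matL (n : ℤ) : SL2 := ⟨!![1, 0; n, 1], by simp [Matrix.det_fin_two_of]⟩

lemma SL2Map_matS (v : ℤ × ℤ) : SL2Map matS v = (-v.2, v.1) := by
  rw [SL2Map_apply]; simp [matS]

lemma SL2Map_matL (n : ℤ) (v : ℤ × ℤ) : SL2Map (matL n) v = (v.1, n * v.1 + v.2) := by
  rw [SL2Map_apply]; simp [matL]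
lemma SL2Map_inv_comp (A : SL2) (v : ℤ × ℤ) : SL2Map A⁻¹ (SL2Map A v) = v := by
  have h : SL2Map (A⁻¹ * A) v = SL2Map A⁻¹ (SL2Map A v) := by rw [SL2Map_mul]; rfl
  rw [← h, inv_mul_cancel, SL2Map_one]; rfl

def SL2Equiv (A : SL2) : (ℤ × ℤ) ≃+ (ℤ × ℤ) where
  toFun := SL2Map A
  invFun := SL2Map A⁻¹
  left_inv v := SL2Map_inv_comp A v
  right_inv v := by
    have := SL2Map_inv_comp A⁻¹ v
    rwa [inv_inv] at this
  map_add' := (SL2Map A).map_add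

lemma card_quot_map (A : SL2) (Λ : AddSubgroup (ℤ × ℤ)) :
    Nat.card ((ℤ × ℤ) ⧸ Λ.map (SL2Map A)) = Nat.card ((ℤ × ℤ) ⧸ Λ) := by
  refine (Nat.card_congr (QuotientAddGroup.congr Λ (Λ.map (SL2Map A)) (SL2Equiv A) ?_).toEquiv).symm
  rfl

lemma card_quot_rectLat (m b : ℕ) : Nat.card ((ℤ × ℤ) ⧸ rectLat m b) = m * b := by
  set f : (ℤ × ℤ) →+ ZMod m × ZMod b :=
    (Int.castAddHom (ZMod m)).prodMap (Int.castAddHom (ZMod b)) with hf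
  have hker : f.ker = rectLat m b := by
    ext ⟨x, y⟩
    simp [hf, AddMonoidHom.mem_ker, Prod.ext_iff, mem_rectLat,
      ZMod.intCast_zmod_eq_zero_iff_dvd]
  have hsurj : Function.Surjective f := by
    rintro ⟨p, q⟩
    obtain ⟨x, rfl⟩ := ZMod.intCast_surjective p
    obtain ⟨y, rfl⟩ := ZMod.intCast_surjective q
    exact ⟨(x, y), rfl⟩
  rw [← hker]
  rw [Nat.card_congr (QuotientAddGroup.quotientKerEquivOfSurjective f hsurj).toEquiv]
  simp [Nat.card_prod, Nat.card_zmod]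

lemma subgroup_int_dvd (H : AddSubgroup ℤ) : ∃ a : ℤ, ∀ x, x ∈ H ↔ a ∣ x := by
  obtain ⟨a, rfl⟩ := Int.subgroup_cyclic H
  exact ⟨a, fun x => by
    simp [AddSubgroup.mem_closure_singleton, dvd_iff_exists_eq_mul_left, eq_comm, mul_comm]⟩

lemma exists_gens (Λ : AddSubgroup (ℤ × ℤ)) (hfin : Finite ((ℤ × ℤ) ⧸ Λ)) :
    ∃ d e c : ℤ, d ≠ 0 ∧ Λ = span2 (d, e) (0, c) := by
  obtain ⟨d, hd⟩ := subgroup_int_dvd (Λ.map (AddMonoidHom.fst ℤ ℤ))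
  obtain ⟨c, hc⟩ := subgroup_int_dvd (Λ.comap (AddMonoidHom.inr ℤ ℤ))
  have hdP : d ∈ Λ.map (AddMonoidHom.fst ℤ ℤ) := (hd d).2 dvd_rfl
  obtain ⟨⟨d0, e⟩, hde, hd'⟩ := hdP
  simp only [AddMonoidHom.coe_fst] at hd'
  subst hd'
  have hcK : ((0 : ℤ), c) ∈ Λ := (hc c).2 dvd_rfl
  have hdne : d0 ≠ 0 := by
    rintro rfl
    have hinj : Function.Injective (fun x : ℤ => QuotientAddGroup.mk (s := Λ) (x, (0 : ℤ))) := by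
      intro x x' h
      rw [QuotientAddGroup.eq] at h
      have hmem : ((-x + x', (0 : ℤ))) ∈ Λ := by simpa using h
      have : (0 : ℤ) ∣ -x + x' := (hd _).1 ⟨_, hmem, rfl⟩
      simp at this
      linarith
    haveI := Finite.of_injective _ hinj
    exact not_finite ℤ
  refine ⟨d0, e, c, hdne, le_antisymm ?_ (span2_le hde hcK)⟩
  intro u hu
  have h1 : d0 ∣ u.1 := (hd u.1).1 ⟨u, hu, rfl⟩
  obtain ⟨k, hk⟩ := h1
  have h2 : u - k • ((d0, e) : ℤ × ℤ) ∈ Λ := AddSubgroup.sub_mem _ hu (AddSubgroup.zsmul_mem _ hde k)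
  have hfst : (u - k • ((d0, e) : ℤ × ℤ)).1 = 0 := by
    simp [Prod.smul_def, smul_eq_mul, hk]; ring
  have h3 : ((0 : ℤ), u.2 - k * e) ∈ Λ := by
    have heq : u - k • ((d0, e) : ℤ × ℤ) = ((0 : ℤ), u.2 - k * e) := by
      rw [Prod.ext_iff]
      exact ⟨hfst, by simp [Prod.smul_def, smul_eq_mul]⟩
    rwa [heq] at h2
  have h4 : c ∣ u.2 - k * e := (hc _).1 (by simpa using h3)
  obtain ⟨l, hl⟩ := h4
  have heq : u = k • ((d0, e) : ℤ × ℤ) + l • ((0 : ℤ), c) := by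
    rw [Prod.ext_iff]
    constructor
    · simp [Prod.smul_def, smul_eq_mul, hk]; ring
    · simp [Prod.smul_def, smul_eq_mul]
      have : u.2 - k * e = c * l := hl
      linarith
  rw [heq]
  exact AddSubgroup.add_mem _ (AddSubgroup.zsmul_mem _ (mem_span2_left _ _) _)
    (AddSubgroup.zsmul_mem _ (mem_span2_right _ _) _)

lemma map_le_rect (A : SL2) {Λ : AddSubgroup (ℤ × ℤ)} {d : ℕ} (h : Λ ≤ rectLat d d) :
    Λ.map (SL2Map A) ≤ rectLat d d := by
  rintro _ ⟨v, hv, rfl⟩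
  obtain ⟨h1, h2⟩ := h hv
  rw [SL2Map_apply]
  exact ⟨dvd_add (h1.mul_left _) (h2.mul_left _), dvd_add (h1.mul_left _) (h2.mul_left _)⟩

lemma le_rect_iff (A : SL2) (Λ : AddSubgroup (ℤ × ℤ)) (d : ℕ) :
    Λ.map (SL2Map A) ≤ rectLat d d ↔ Λ ≤ rectLat d d := by
  refine ⟨fun h => ?_, map_le_rect A⟩
  have h2 := map_le_rect A⁻¹ h
  rw [AddSubgroup.map_map, ← SL2Map_mul, inv_mul_cancel, SL2Map_one] at h2
  simpa using h2

lemma emod_natAbs_lt (a : ℤ) {b : ℤ} (hb : b ≠ 0) : (a % b).natAbs < b.natAbs := by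
  have h1 := Int.emod_nonneg a hb
  have h2 : a % b < |b| := by
    have := Int.emod_lt_of_pos a (abs_pos.2 hb)
    rwa [Int.emod_abs] at this
  rw [Int.abs_eq_natAbs] at h2
  omega

lemma sl2_map_mul (A B : SL2) (Λ : AddSubgroup (ℤ × ℤ)) :
    Λ.map (SL2Map (A * B)) = (Λ.map (SL2Map B)).map (SL2Map A) := by
  rw [SL2Map_mul, ← AddSubgroup.map_map]

lemma map_span2_S (v w : ℤ × ℤ) :
    (span2 v w).map (SL2Map matS) = span2 (-v.2, v.1) (-w.2, w.1) := by
  rw [span2_map, SL2Map_matS, SL2Map_matS]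

lemma map_span2_L (n : ℤ) (v w : ℤ × ℤ) :
    (span2 v w).map (SL2Map (matL n)) = span2 (v.1, n * v.1 + v.2) (w.1, n * w.1 + w.2) := by
  rw [span2_map, SL2Map_matL, SL2Map_matL]

lemma key : ∀ n : ℕ, ∀ v w : ℤ × ℤ, v.1 ≠ 0 → v.1.natAbs ≤ n →
    ∃ (A : SL2) (m b : ℕ), b ∣ m ∧ (span2 v w).map (SL2Map A) = rectLat m b := by
  intro n
  induction n using Nat.strong_induction_on with
  | _ n ih =>
  rintro ⟨v1, v2⟩ ⟨w1, w2⟩ h1' hle'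
  replace h1 : v1 ≠ 0 := h1'
  replace hle : v1.natAbs ≤ n := hle'
  set q2 := v2 / v1 with hq2def
  set r2 := v2 % v1 with hr2def
  have move1 : (span2 (v1, v2) (w1, w2)).map (SL2Map (matL (-q2)))
      = span2 (v1, r2) (w1, w2 - q2 * w1) := by
    rw [map_span2_L]
    congr 1
    · rw [Prod.ext_iff]
      refine ⟨rfl, ?_⟩
      simp only [hr2def, hq2def, Int.emod_def]
      ring
    · rw [Prod.ext_iff]
      exact ⟨rfl, by ring⟩
  by_cases hr2 : r2 = 0
  · set w2' := w2 - q2 * w1 with hw2'def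
    set q1 := w1 / v1 with hq1def
    set r1 := w1 % v1 with hr1def
    have col1 : span2 (v1, (0 : ℤ)) (w1, w2') = span2 (v1, 0) (r1, w2') := by
      have h : ((r1, w2') : ℤ × ℤ) + q1 • ((v1, (0 : ℤ)) : ℤ × ℤ) = (w1, w2') := by
        rw [Prod.ext_iff]
        constructor
        · show r1 + q1 * v1 = w1
          simp only [hr1def, hq1def, Int.emod_def]
          ring
        · show w2' + q1 * 0 = w2'
          ring
      rw [← h, span2_add_right]
    by_cases hr1 : r1 = 0
    · by_cases hdvd : v1 ∣ w2'
      · refine ⟨matS * matL (-q2), w2'.natAbs, v1.natAbs, Int.natAbs_dvd_natAbs.2 hdvd, ?_⟩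
        rw [sl2_map_mul, move1, hr2, col1, hr1, map_span2_S]
        show span2 (-(0 : ℤ), v1) (-w2', 0) = _
        rw [neg_zero, span2_comm, span2_diag]
        rw [Int.natAbs_neg]
      · set q3 := w2' / v1 with hq3def
        set r3 := w2' % v1 with hr3def
        have hr3 : r3 ≠ 0 := fun h => hdvd (Int.dvd_iff_emod_eq_zero.2 h)
        have hlt : r3.natAbs < n := lt_of_lt_of_le (emod_natAbs_lt w2' h1) hle
        obtain ⟨A, m, b, hdb, hmap⟩ := ih r3.natAbs hlt ((-r3 : ℤ), v1) ((-w2' : ℤ), 0)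
          (by simpa using hr3) (by simp)
        refine ⟨A * matS * matL (-q3) * matL (-q2), m, b, hdb, ?_⟩
        have step2 : span2 (v1, (0 : ℤ)) ((0 : ℤ), w2') = span2 (v1, w2') (0, w2') := by
          have h : ((v1, (0 : ℤ)) : ℤ × ℤ) + (1 : ℤ) • (((0 : ℤ), w2') : ℤ × ℤ)
              = (v1, w2') := by
            rw [Prod.ext_iff]
            exact ⟨by show v1 + 1 * 0 = v1; ring, by show 0 + 1 * w2' = w2'; ring⟩
          rw [← span2_add_left (v1, 0) (0, w2') 1, h]
        have step3 : (span2 (v1, w2') ((0 : ℤ), w2')).map (SL2Map (matL (-q3)))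
            = span2 (v1, r3) (0, w2') := by
          rw [map_span2_L]
          congr 1
          · rw [Prod.ext_iff]
            refine ⟨rfl, ?_⟩
            show -q3 * v1 + w2' = r3
            simp only [hr3def, hq3def, Int.emod_def]
            ring
          · rw [Prod.ext_iff]
            exact ⟨rfl, by show -q3 * 0 + w2' = w2'; ring⟩
        have step4 : (span2 (v1, r3) ((0 : ℤ), w2')).map (SL2Map matS)
            = span2 ((-r3 : ℤ), v1) ((-w2' : ℤ), 0) := by
          rw [map_span2_S]
        rw [sl2_map_mul, sl2_map_mul, sl2_map_mul, move1, hr2, col1, hr1, step2, step3,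
          step4, hmap]
    · have hlt : r1.natAbs < n := lt_of_lt_of_le (emod_natAbs_lt w1 h1) hle
      obtain ⟨A, m, b, hdb, hmap⟩ := ih r1.natAbs hlt ((r1 : ℤ), w2') ((v1 : ℤ), 0)
        hr1 le_rfl
      refine ⟨A * matL (-q2), m, b, hdb, ?_⟩
      rw [sl2_map_mul, move1, hr2, col1, span2_comm, hmap]
  · have hlt : r2.natAbs < n := lt_of_lt_of_le (emod_natAbs_lt v2 h1) hle
    obtain ⟨A, m, b, hdb, hmap⟩ := ih r2.natAbs hlt ((-r2 : ℤ), v1)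
      ((-(w2 - q2 * w1) : ℤ), w1) (by simpa using hr2) (by simp)
    refine ⟨A * matS * matL (-q2), m, b, hdb, ?_⟩
    rw [sl2_map_mul, sl2_map_mul, move1, map_span2_S, hmap]

/-- Every sublattice of `ℤ²` of index `N` lies in the `SL(2, ℤ)`-orbit of the sublattice
`(ab)ℤ × bℤ` for exactly one pair of positive integers `(a, b)` with `a b² = N`; that is,
the lattices `(ab)ℤ × bℤ` with `a b² = N` form a complete set of representatives of the
orbits. -/
theorem orbit_representatives (N : ℕ) (hN : 0 < N) (Λ : AddSubgroup (ℤ × ℤ))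
    (hΛ : Nat.card ((ℤ × ℤ) ⧸ Λ) = N) :
    ∃! ab : ℕ × ℕ, 0 < ab.1 ∧ 0 < ab.2 ∧ ab.1 * ab.2 ^ 2 = N ∧
      ∃ A : Matrix.SpecialLinearGroup (Fin 2) ℤ,
        Λ.map (SL2Map A) = rectLat (ab.1 * ab.2) ab.2 := by
  haveI hfin : Finite ((ℤ × ℤ) ⧸ Λ) := Nat.finite_of_card_ne_zero (by rw [hΛ]; exact hN.ne')
  obtain ⟨d, e, c, hd, rfl⟩ := exists_gens Λ hfin
  obtain ⟨A, m, b, hdb, hmap⟩ := key d.natAbs (d, e) (0, c) hd le_rfl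
  have hmb : m * b = N := by
    rw [← hΛ, ← card_quot_map A, hmap, card_quot_rectLat]
  have hmpos : 0 < m := Nat.pos_of_ne_zero (fun h => by rw [h, zero_mul] at hmb; omega)
  have hbpos : 0 < b := Nat.pos_of_ne_zero (fun h => by rw [h, mul_zero] at hmb; omega)
  set a := m / b with hadef
  have hab : a * b = m := Nat.div_mul_cancel hdb
  have hapos : 0 < a := Nat.pos_of_ne_zero (fun h => by rw [h, zero_mul] at hab; omega)
  have habN : a * b ^ 2 = N := by rw [pow_two, ← mul_assoc, hab, hmb]
  refine ⟨(a, b), ⟨hapos, hbpos, habN, A, ?_⟩, ?_⟩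
  · show _ = rectLat (a * b) b
    rw [hab]; exact hmap
  · rintro ⟨a', b'⟩ ⟨ha', hb', hN', A', hA'⟩
    simp only at ha' hb' hN' hA' ⊢
    have inv1 : span2 (d, e) (0, c) ≤ rectLat b b := by
      apply (le_rect_iff A _ b).1
      rw [hmap]
      rintro ⟨x, y⟩ ⟨hx, hy⟩
      exact ⟨dvd_trans (Int.natCast_dvd_natCast.2 hdb) hx, hy⟩
    have inv1' : span2 (d, e) (0, c) ≤ rectLat b' b' := by
      apply (le_rect_iff A' _ b').1
      rw [hA']
      rintro ⟨x, y⟩ ⟨hx, hy⟩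
      exact ⟨dvd_trans (Int.natCast_dvd_natCast.2 (Dvd.intro_left a' rfl)) hx, hy⟩
    have hbb' : b ∣ b' := by
      have h2 := map_le_rect A' inv1
      rw [hA'] at h2
      have h3 := h2 (show (((0 : ℤ), (b' : ℤ)) : ℤ × ℤ) ∈ rectLat (a' * b') b' from
        ⟨dvd_zero _, dvd_refl _⟩)
      have h4 : (b : ℤ) ∣ (b' : ℤ) := h3.2
      exact_mod_cast h4
    have hb'b : b' ∣ b := by
      have h2 := map_le_rect A inv1'
      rw [hmap] at h2
      have h3 := h2 (show (((0 : ℤ), (b : ℤ)) : ℤ × ℤ) ∈ rectLat m b from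
        ⟨dvd_zero _, dvd_refl _⟩)
      have h4 : (b' : ℤ) ∣ (b : ℤ) := h3.2
      exact_mod_cast h4
    have hbeq : b' = b := Nat.dvd_antisymm hb'b hbb'
    have haeq : a' = a := by
      subst hbeq
      have h4 : a' * b' ^ 2 = a * b' ^ 2 := by rw [hN', habN]
      exact Nat.eq_of_mul_eq_mul_right (pow_pos hb' 2) h4
    simp [haeq, hbeq]
end

section
/- Let p be a prime, let j₁, j₂ ≥ 0 be integers, and let i be an integer coprime to p. Then the sublattice of ℤ² generated by (p^{j₁}, 0) and (i, p^{j₂}) lies in the same SL(2,ℤ)-orbit as the sublattice p^{j₁+j₂}ℤ × ℤ = {(x, y) ∈ ℤ² : p^{j₁+j₂} ∣ x}. -/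
/-- The sublattice `mℤ × ℤ = {(x, y) ∈ ℤ² : m ∣ x}`. -/
def stripeLat (m : ℤ) : AddSubgroup (ℤ × ℤ) where
  carrier := {v : ℤ × ℤ | m ∣ v.1}
  zero_mem' := dvd_zero _
  add_mem' := fun ha hb => dvd_add ha hb
  neg_mem' := fun ha => dvd_neg.2 ha

/-- For a prime `p` and `i` coprime to `p`, the sublattice of `ℤ²` generated by
`(p^{j₁}, 0)` and `(i, p^{j₂})` lies in the same `SL(2, ℤ)`-orbit as the sublattice
`p^{j₁+j₂}ℤ × ℤ = {(x, y) : p^{j₁+j₂} ∣ x}`. -/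
theorem coprime_lattice_orbit (p : ℕ) (hp : p.Prime) (j₁ j₂ : ℕ) (i : ℤ)
    (hi : IsCoprime i (p : ℤ)) :
    ∃ A : Matrix.SpecialLinearGroup (Fin 2) ℤ,
      (AddSubgroup.closure {(((p : ℤ) ^ j₁, 0) : ℤ × ℤ), (i, (p : ℤ) ^ j₂)}).map (SL2Map A)
        = stripeLat ((p : ℤ) ^ (j₁ + j₂)) := by
  obtain ⟨u, v, huv⟩ := hi.pow_right (n := j₂)
  refine ⟨⟨!![(p : ℤ) ^ j₂, -i; u, v], by
    simp [Matrix.det_fin_two_of]; linarith⟩, ?_⟩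
  have h1 : SL2Map ⟨!![(p : ℤ) ^ j₂, -i; u, v], by
      simp [Matrix.det_fin_two_of]; linarith⟩ ((p : ℤ) ^ j₁, 0)
      = ((p : ℤ) ^ (j₁ + j₂), u * (p : ℤ) ^ j₁) := by
    simp [SL2Map]; ring
  have h2 : SL2Map ⟨!![(p : ℤ) ^ j₂, -i; u, v], by
      simp [Matrix.det_fin_two_of]; linarith⟩ (i, (p : ℤ) ^ j₂)
      = ((0 : ℤ), (1 : ℤ)) := by
    simp [SL2Map]; constructor <;> linarith
  rw [AddMonoidHom.map_closure, Set.image_pair, h1, h2]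
  apply le_antisymm
  · rw [AddSubgroup.closure_le]
    rintro x (rfl | rfl)
    · exact ⟨1, by ring⟩
    · exact ⟨0, by ring⟩
  · rintro ⟨x, y⟩ ⟨k, hk⟩
    have : ((x, y) : ℤ × ℤ) = k • (((p : ℤ) ^ (j₁ + j₂), u * (p : ℤ) ^ j₁) : ℤ × ℤ)
        + (y - k * (u * (p : ℤ) ^ j₁)) • (((0 : ℤ), (1 : ℤ)) : ℤ × ℤ) := by
      simp [Prod.ext_iff, smul_eq_mul]
      linarith
    rw [this]
    exact add_mem (zsmul_mem (AddSubgroup.subset_closure (by simp)) k)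
      (zsmul_mem (AddSubgroup.subset_closure (by simp)) _)
end

section
/- Let g, h : ℕ₊ → ℂ be sequences whose power series Σ_{n≥1} g(n) tⁿ and Σ_{n≥1} h(n) tⁿ both have radius of convergence at least 1, and let f = g ⋆ h be their Dirichlet convolution, f(n) = Σ_{d ∣ n} g(d) h(n/d). Then for every complex t with |t| < 1, Σ_{n=1}^∞ f(n) tⁿ = Σ_{m=1}^∞ g(m) (Σ_{k=1}^∞ h(k) t^{mk}), with all series converging absolutely. -/
set_option maxHeartbeats 1000000

/-- Equivalence between `ℕ × ℕ` and pairs of divisors: `(m, k) ↦ ((m+1)(k+1)-1, (m+1, k+1))`. -/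
def dirichletDivEquiv : ℕ × ℕ ≃ Σ n : ℕ, {p : ℕ × ℕ // p ∈ (n + 1).divisorsAntidiagonal} where
  toFun p := ⟨(p.1 + 1) * (p.2 + 1) - 1, ⟨(p.1 + 1, p.2 + 1), by
    rw [Nat.mem_divisorsAntidiagonal]
    have h1 : 1 ≤ (p.1 + 1) * (p.2 + 1) := Nat.one_le_iff_ne_zero.mpr (by positivity)
    refine ⟨?_, by omega⟩
    show (p.1 + 1) * (p.2 + 1) = (p.1 + 1) * (p.2 + 1) - 1 + 1
    omega⟩⟩
  invFun x := (x.2.1.1 - 1, x.2.1.2 - 1)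
  left_inv p := by simp
  right_inv x := by
    obtain ⟨n, ⟨⟨d, e⟩, hp⟩⟩ := x
    rw [Nat.mem_divisorsAntidiagonal] at hp
    have hd : 1 ≤ d := Nat.one_le_iff_ne_zero.mpr (fun h => by simp [h] at hp)
    have he : 1 ≤ e := Nat.one_le_iff_ne_zero.mpr (fun h => by simp [h] at hp)
    have h1 : (d - 1 + 1) = d := by omega
    have h2 : (e - 1 + 1) = e := by omega
    have h3 : (d - 1 + 1) * (e - 1 + 1) - 1 = n := by rw [h1, h2, hp.1]; omega
    exact Sigma.subtype_ext h3 (by simp [h1, h2])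

/-- If the power series of `g` and `h` (indexed by positive integers) both have radius of
convergence at least 1, and `f = g ⋆ h` is their Dirichlet convolution
`f(n) = ∑_{d ∣ n} g(d) h(n/d)`, then for `|t| < 1` one has
`∑_{n ≥ 1} f(n) tⁿ = ∑_{m ≥ 1} g(m) (∑_{k ≥ 1} h(k) t^{mk})`, with all series converging
absolutely. (Sequences on positive integers are modelled as `ℕ → ℂ` evaluated at `n + 1`.) -/
theorem dirichlet_convolution_power_series (g h : ℕ → ℂ)
    (hg : ∀ t : ℂ, ‖t‖ < 1 → Summable fun n : ℕ => ‖g (n + 1) * t ^ (n + 1)‖)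
    (hh : ∀ t : ℂ, ‖t‖ < 1 → Summable fun n : ℕ => ‖h (n + 1) * t ^ (n + 1)‖)
    (f : ℕ → ℂ) (hf : ∀ n : ℕ, 0 < n → f n = ∑ d ∈ n.divisors, g d * h (n / d))
    (t : ℂ) (ht : ‖t‖ < 1) :
    (Summable fun n : ℕ => ‖f (n + 1) * t ^ (n + 1)‖) ∧
    (∀ m : ℕ, Summable fun k : ℕ => ‖h (k + 1) * t ^ ((m + 1) * (k + 1))‖) ∧
    (Summable fun m : ℕ => ‖g (m + 1) * ∑' k : ℕ, h (k + 1) * t ^ ((m + 1) * (k + 1))‖) ∧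
    ∑' n : ℕ, f (n + 1) * t ^ (n + 1) =
      ∑' m : ℕ, g (m + 1) * ∑' k : ℕ, h (k + 1) * t ^ ((m + 1) * (k + 1)) := by
  classical
  set r : ℝ := Real.sqrt ‖t‖ with hr
  have hr0 : 0 ≤ r := Real.sqrt_nonneg _
  have hr1 : r < 1 := by
    have := Real.sqrt_lt_sqrt (norm_nonneg t) ht
    simpa using this
  have hrsq : ‖t‖ = r ^ 2 := (Real.sq_sqrt (norm_nonneg t)).symm
  -- summability of g and h weighted by r
  have hG : Summable fun m : ℕ => ‖g (m + 1)‖ * r ^ (m + 1) := by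
    have := hg (r : ℂ) (by simpa [abs_of_nonneg hr0] using hr1)
    refine this.congr fun m => ?_
    simp [norm_mul, norm_pow, Complex.norm_real, abs_of_nonneg hr0]
  have hH : Summable fun k : ℕ => ‖h (k + 1)‖ * r ^ (k + 1) := by
    have := hh (r : ℂ) (by simpa [abs_of_nonneg hr0] using hr1)
    refine this.congr fun k => ?_
    simp [norm_mul, norm_pow, Complex.norm_real, abs_of_nonneg hr0]
  -- the double-series term
  set F : ℕ × ℕ → ℂ := fun p => g (p.1 + 1) * h (p.2 + 1) * t ^ ((p.1 + 1) * (p.2 + 1)) with hF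
  have hbound : ∀ p : ℕ × ℕ,
      ‖F p‖ ≤ (‖g (p.1 + 1)‖ * r ^ (p.1 + 1)) * (‖h (p.2 + 1)‖ * r ^ (p.2 + 1)) := by
    rintro ⟨m, k⟩
    have hle : (m + 1) + (k + 1) ≤ 2 * ((m + 1) * (k + 1)) := by nlinarith
    have ht' : ‖t‖ ^ ((m + 1) * (k + 1)) ≤ r ^ ((m + 1) + (k + 1)) := by
      rw [hrsq, ← pow_mul]
      exact pow_le_pow_of_le_one hr0 hr1.le (by omega)
    calc ‖F (m, k)‖ = ‖g (m + 1)‖ * ‖h (k + 1)‖ * ‖t‖ ^ ((m + 1) * (k + 1)) := by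
          simp [hF, norm_mul, norm_pow]
      _ ≤ ‖g (m + 1)‖ * ‖h (k + 1)‖ * r ^ ((m + 1) + (k + 1)) := by
          exact mul_le_mul_of_nonneg_left ht' (by positivity)
      _ = (‖g (m + 1)‖ * r ^ (m + 1)) * (‖h (k + 1)‖ * r ^ (k + 1)) := by ring
  have hFsum : Summable fun p : ℕ × ℕ => ‖F p‖ := by
    refine Summable.of_nonneg_of_le (fun p => norm_nonneg _) hbound ?_
    exact hG.mul_of_nonneg hH (fun m => by positivity) (fun k => by positivity)
  -- Claim 2
  have claim2 : ∀ m : ℕ, Summable fun k : ℕ => ‖h (k + 1) * t ^ ((m + 1) * (k + 1))‖ := by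
    intro m
    have hsmall : ‖t ^ (m + 1)‖ < 1 := by
      rw [norm_pow]
      exact pow_lt_one₀ (norm_nonneg t) ht (Nat.succ_ne_zero m)
    have := hh (t ^ (m + 1)) hsmall
    refine this.congr fun k => ?_
    rw [← pow_mul]
  -- fiberwise summability over ℕ × ℕ (norms)
  have hFprod := (summable_prod_of_nonneg (fun p => norm_nonneg (F p))).mp hFsum
  -- Claim 3
  have claim3 : Summable fun m : ℕ =>
      ‖g (m + 1) * ∑' k : ℕ, h (k + 1) * t ^ ((m + 1) * (k + 1))‖ := by
    refine Summable.of_nonneg_of_le (fun m => norm_nonneg _) (fun m => ?_) hFprod.2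
    have h1 : ‖∑' k : ℕ, h (k + 1) * t ^ ((m + 1) * (k + 1))‖ ≤
        ∑' k : ℕ, ‖h (k + 1) * t ^ ((m + 1) * (k + 1))‖ := norm_tsum_le_tsum_norm (claim2 m)
    calc ‖g (m + 1) * ∑' k : ℕ, h (k + 1) * t ^ ((m + 1) * (k + 1))‖
        = ‖g (m + 1)‖ * ‖∑' k : ℕ, h (k + 1) * t ^ ((m + 1) * (k + 1))‖ := norm_mul _ _
      _ ≤ ‖g (m + 1)‖ * ∑' k : ℕ, ‖h (k + 1) * t ^ ((m + 1) * (k + 1))‖ :=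
          mul_le_mul_of_nonneg_left h1 (norm_nonneg _)
      _ = ∑' k : ℕ, ‖F (m, k)‖ := by
          rw [← tsum_mul_left]
          exact tsum_congr fun k => by simp [hF, norm_mul, norm_pow]; ring
  -- sigma reindexing
  set E := dirichletDivEquiv with hE
  have hFsig : Summable fun x : Σ n : ℕ, {p : ℕ × ℕ // p ∈ (n + 1).divisorsAntidiagonal} =>
      ‖F (E.symm x)‖ := E.symm.summable_iff.mpr hFsum
  have hterm : ∀ (n : ℕ) (q : {p : ℕ × ℕ // p ∈ (n + 1).divisorsAntidiagonal}),
      F (E.symm ⟨n, q⟩) = g (q : ℕ × ℕ).1 * h (q : ℕ × ℕ).2 * t ^ (n + 1) := by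
    rintro n ⟨⟨d, e⟩, hp⟩
    have hp' := hp
    rw [Nat.mem_divisorsAntidiagonal] at hp'
    have hd : 1 ≤ d := Nat.one_le_iff_ne_zero.mpr (fun hc => by simp [hc] at hp')
    have he : 1 ≤ e := Nat.one_le_iff_ne_zero.mpr (fun hc => by simp [hc] at hp')
    have h1 : (d - 1 + 1) = d := by omega
    have h2 : (e - 1 + 1) = e := by omega
    simp only [hE, hF, dirichletDivEquiv, Equiv.coe_fn_symm_mk, h1, h2, hp'.1]
  have hfiber : ∀ n : ℕ,
      (∑ p ∈ (n + 1).divisorsAntidiagonal, ‖g p.1 * h p.2 * t ^ (n + 1)‖) =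
      ∑' q : {p : ℕ × ℕ // p ∈ (n + 1).divisorsAntidiagonal}, ‖F (E.symm ⟨n, q⟩)‖ := by
    intro n
    rw [show (fun q : {p : ℕ × ℕ // p ∈ (n + 1).divisorsAntidiagonal} => ‖F (E.symm ⟨n, q⟩)‖)
        = fun q : {p : ℕ × ℕ // p ∈ (n + 1).divisorsAntidiagonal} =>
          ‖g (q : ℕ × ℕ).1 * h (q : ℕ × ℕ).2 * t ^ (n + 1)‖ from
      funext fun q => by rw [hterm n q]]
    exact (Finset.tsum_subtype ((n + 1).divisorsAntidiagonal) (fun p => ‖g p.1 * h p.2 * t ^ (n + 1)‖)).symm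
  have hfib2 : ∀ n : ℕ,
      (∑' q : {p : ℕ × ℕ // p ∈ (n + 1).divisorsAntidiagonal}, F (E.symm ⟨n, q⟩)) =
      ∑ p ∈ (n + 1).divisorsAntidiagonal, g p.1 * h p.2 * t ^ (n + 1) := by
    intro n
    rw [show (fun q : {p : ℕ × ℕ // p ∈ (n + 1).divisorsAntidiagonal} => F (E.symm ⟨n, q⟩))
        = fun q : {p : ℕ × ℕ // p ∈ (n + 1).divisorsAntidiagonal} =>
          g (q : ℕ × ℕ).1 * h (q : ℕ × ℕ).2 * t ^ (n + 1) from funext (hterm n)]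
    exact Finset.tsum_subtype ((n + 1).divisorsAntidiagonal) (fun p => g p.1 * h p.2 * t ^ (n + 1))
  -- expression for f in terms of divisorsAntidiagonal
  have hfrw : ∀ n : ℕ, f (n + 1) * t ^ (n + 1) =
      ∑ p ∈ (n + 1).divisorsAntidiagonal, g p.1 * h p.2 * t ^ (n + 1) := by
    intro n
    rw [hf (n + 1) (Nat.succ_pos n),
      ← Nat.sum_divisorsAntidiagonal (f := fun d e => g d * h e), Finset.sum_mul]
  -- Claim 1
  have hsigsums := (summable_sigma_of_nonneg (fun x => norm_nonneg (F (E.symm x)))).mp hFsig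
  have claim1 : Summable fun n : ℕ => ‖f (n + 1) * t ^ (n + 1)‖ := by
    refine Summable.of_nonneg_of_le (fun n => norm_nonneg _) (fun n => ?_) hsigsums.2
    rw [hfrw n, ← hfiber n]
    exact norm_sum_le _ _
  refine ⟨claim1, claim2, claim3, ?_⟩
  -- the main equality
  have hFsum' : Summable F := hFsum.of_norm
  have hFsig' : Summable fun x : Σ n : ℕ, {p : ℕ × ℕ // p ∈ (n + 1).divisorsAntidiagonal} =>
      F (E.symm x) := E.symm.summable_iff.mpr hFsum'
  have key1 : ∑' n : ℕ, f (n + 1) * t ^ (n + 1) = ∑' p : ℕ × ℕ, F p := by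
    rw [← E.symm.tsum_eq F, Summable.tsum_sigma hFsig']
    exact tsum_congr fun n => by rw [hfrw n, hfib2 n]
  have key2 : ∑' p : ℕ × ℕ, F p =
      ∑' m : ℕ, g (m + 1) * ∑' k : ℕ, h (k + 1) * t ^ ((m + 1) * (k + 1)) := by
    rw [Summable.tsum_prod hFsum']
    refine tsum_congr fun m => ?_
    rw [← tsum_mul_left]
    exact tsum_congr fun k => by simp [hF]; ring
  rw [key1, key2]
end
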